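/- There exists a constant c > 1 such that for all integers m, k > 1 and every odd integer n ≥ 3, one has ℓ(X_{1,m} ∩ X_{n,k}) < c·ℓ(X_{1,m})·ℓ(X_{n,k}). -/

import Mathlib

open MeasureTheory

open Set
open scoped ENNReal

/-- The Gauss map `G(x) = 1/x - ⌊1/x⌋`. -/
noncomputable def gaussMap (x : ℝ) : ℝ := Int.fract x⁻¹

/-- The `m`-th continued fraction digit `a_m(x) = ⌊1 / G^{m-1}(x)⌋` (for `m ≥ 1`). -/
noncomputable def cfDigit (m : ℕ) (x : ℝ) : ℤ := ⌊(gaussMap^[m - 1] x)⁻¹⌋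

/-- `X_{m,n}`: the set of irrational `x ∈ (0,1)` whose `m`-th continued fraction
digit exceeds `n`. -/
def cfSet (m n : ℕ) : Set ℝ :=
  {x | x ∈ Set.Ioo (0 : ℝ) 1 ∧ Irrational x ∧ (n : ℤ) < cfDigit m x}

lemma measurable_gaussMap : Measurable gaussMap := measurable_inv.fract

lemma irrationalSet_meas : MeasurableSet {x : ℝ | Irrational x} := by
  have : {x : ℝ | Irrational x} = (Set.range ((↑) : ℚ → ℝ))ᶜ := rfl
  rw [this]
  exact (Set.countable_range _).measurableSet.compl

lemma volume_rat : volume (Set.range ((↑) : ℚ → ℝ)) = 0 :=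
  (Set.countable_range _).measure_zero _

lemma vol_inter_irr (T : Set ℝ) : volume (T ∩ {x | Irrational x}) = volume T := by
  refine le_antisymm (measure_mono Set.inter_subset_left) ?_
  have h0 : volume (T \ {x | Irrational x}) = 0 := by
    refine measure_mono_null ?_ volume_rat
    intro x hx
    simpa [Irrational] using hx.2
  calc volume T ≤ volume ((T ∩ {x | Irrational x}) ∪ (T \ {x | Irrational x})) := by
        refine measure_mono ?_
        intro x hx
        by_cases h : Irrational x
        · exact Or.inl ⟨hx, h⟩
        · exact Or.inr ⟨hx, h⟩
    _ ≤ volume (T ∩ {x | Irrational x}) + volume (T \ {x | Irrational x}) := measure_union_le _ _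
    _ = volume (T ∩ {x | Irrational x}) := by rw [h0, add_zero]

lemma gaussMap_mem {x : ℝ} (hx : x ∈ Ioo (0:ℝ) 1) (hirr : Irrational x) :
    gaussMap x ∈ Ioo (0:ℝ) 1 ∧ Irrational (gaussMap x) := by
  have hinv : Irrational x⁻¹ := hirr.inv
  have hfr : Irrational (gaussMap x) := by
    have : gaussMap x = x⁻¹ - ⌊x⁻¹⌋ := rfl
    rw [this]; exact hinv.sub_intCast _
  refine ⟨⟨?_, ?_⟩, hfr⟩
  · rcases lt_or_eq_of_le (Int.fract_nonneg x⁻¹) with h | h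
    · exact h
    · exfalso; exact hfr.ne_int 0 (by simpa [gaussMap] using h.symm)
  · exact Int.fract_lt_one _

lemma gaussMap_iter_mem {x : ℝ} (hx : x ∈ Ioo (0:ℝ) 1) (hirr : Irrational x) (j : ℕ) :
    gaussMap^[j] x ∈ Ioo (0:ℝ) 1 ∧ Irrational (gaussMap^[j] x) := by
  induction j with
  | zero => exact ⟨hx, hirr⟩
  | succ n ih =>
      rw [Function.iterate_succ_apply']
      exact gaussMap_mem ih.1 ih.2

lemma cfSet_one (j : ℕ) :
    cfSet 1 j = {x | Irrational x} ∩ Ioo (0:ℝ) (((j:ℝ)+1)⁻¹) := by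
  ext x
  simp only [cfSet, cfDigit, Function.iterate_zero, id_eq, Set.mem_setOf_eq, Set.mem_inter_iff,
    Set.mem_Ioo]
  constructor
  · rintro ⟨⟨hx0, hx1⟩, hirr, hdig⟩
    refine ⟨hirr, hx0, ?_⟩
    have h1 : ((j:ℝ)+1) ≤ x⁻¹ := by
      have : (j:ℤ) + 1 ≤ ⌊x⁻¹⌋ := hdig
      have := (Int.le_floor).mp this
      push_cast at this ⊢
      linarith
    have h2 : ((j:ℝ)+1) ≠ x⁻¹ := by
      intro h
      exact (hirr.inv).ne_int ((j:ℤ)+1) (by push_cast; linarith)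
    have h3 : ((j:ℝ)+1) < x⁻¹ := lt_of_le_of_ne h1 h2
    have hj : (0:ℝ) < (j:ℝ)+1 := by positivity
    calc x = (x⁻¹)⁻¹ := (inv_inv x).symm
      _ < ((j:ℝ)+1)⁻¹ := by
          exact inv_strictAnti₀ hj h3
  · rintro ⟨hirr, hx0, hxj⟩
    have hj : (0:ℝ) < (j:ℝ)+1 := by positivity
    have hx1 : x < 1 := lt_of_lt_of_le hxj (by
      rw [inv_le_one_iff₀]; right; linarith)
    refine ⟨⟨hx0, hx1⟩, hirr, ?_⟩
    have h3 : ((j:ℝ)+1) < x⁻¹ := by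
      calc ((j:ℝ)+1) = (((j:ℝ)+1)⁻¹)⁻¹ := (inv_inv _).symm
        _ < x⁻¹ := inv_strictAnti₀ hx0 hxj
    show (j:ℤ) < ⌊x⁻¹⌋
    have : ((j:ℤ)+1 : ℤ) ≤ ⌊x⁻¹⌋ := Int.le_floor.mpr (by push_cast; linarith)
    omega

lemma volume_cfSet_one (j : ℕ) :
    volume (cfSet 1 j) = ENNReal.ofReal (((j:ℝ)+1)⁻¹) := by
  rw [cfSet_one, Set.inter_comm, vol_inter_irr, Real.volume_Ioo, sub_zero]

lemma cfSet_one_subset (j : ℕ) : cfSet 1 j ⊆ Ioo (0:ℝ) 1 := fun x hx => hx.1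

lemma cfSet_one_meas (j : ℕ) : MeasurableSet (cfSet 1 j) := by
  rw [cfSet_one]; exact irrationalSet_meas.inter measurableSet_Ioo

lemma cfSet_eq (n k : ℕ) (hn : 1 ≤ n) :
    cfSet n k = (gaussMap^[n-1]) ⁻¹' (cfSet 1 k) ∩ Ioo (0:ℝ) 1 ∩ {x | Irrational x} := by
  ext x
  simp only [cfSet, Set.mem_setOf_eq, Set.mem_inter_iff, Set.mem_preimage]
  constructor
  · rintro ⟨hx, hirr, hdig⟩
    obtain ⟨hmem, hirr'⟩ := gaussMap_iter_mem hx hirr (n-1)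
    exact ⟨⟨⟨hmem, hirr', hdig⟩, hx⟩, hirr⟩
  · rintro ⟨⟨⟨_, _, hdig⟩, hx⟩, hirr⟩
    exact ⟨hx, hirr, hdig⟩

/-- Inverse branches of the Gauss map: `phiB a t = 1/(a+1+t)` (branch with digit `a+1`). -/
noncomputable def phiB (a : ℕ) (t : ℝ) : ℝ := ((a:ℝ) + 1 + t)⁻¹

/-- The branch interval on which `⌊1/x⌋ = a+1`. -/
def brI (a : ℕ) : Set ℝ := Ioo (((a:ℝ)+2)⁻¹) (((a:ℝ)+1)⁻¹)

lemma brI_subset (a : ℕ) : brI a ⊆ Ioo (0:ℝ) 1 := by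
  intro x hx
  obtain ⟨h1, h2⟩ := hx
  constructor
  · have : (0:ℝ) < ((a:ℝ)+2)⁻¹ := by positivity
    linarith
  · have h3 : ((a:ℝ)+1)⁻¹ ≤ 1 := by
      rw [inv_le_one_iff₀]; right; push_cast; linarith [Nat.cast_nonneg (α := ℝ) a]
    linarith

lemma brI_disjoint : Pairwise (Function.onFun Disjoint brI) := by
  have key : ∀ a b : ℕ, a < b → Disjoint (brI a) (brI b) := by
    intro a b hab
    rw [Set.disjoint_left]
    rintro x ⟨ha1, _⟩ ⟨_, hb2⟩
    have hba : (a:ℝ) ≥ 0 := Nat.cast_nonneg a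
    have h1 : ((b:ℝ)+1) ≥ (a:ℝ)+2 := by
      have : (b:ℝ) ≥ (a:ℝ)+1 := by exact_mod_cast hab
      linarith
    have : ((b:ℝ)+1)⁻¹ ≤ ((a:ℝ)+2)⁻¹ := by
      apply inv_anti₀ (by positivity) h1
    linarith
  intro a b hne
  rcases lt_or_gt_of_ne hne with h | h
  · exact key a b h
  · exact (key b a h).symm

lemma claimA {E : Set ℝ} (hE : E ⊆ Ioo (0:ℝ) 1) (a : ℕ) :
    gaussMap ⁻¹' E ∩ brI a = phiB a '' E := by
  ext x
  simp only [Set.mem_inter_iff, Set.mem_preimage, brI, Set.mem_Ioo, Set.mem_image]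
  constructor
  · rintro ⟨hGE, h1, h2⟩
    have hx0 : (0:ℝ) < x := lt_trans (by positivity) h1
    have hinv1 : ((a:ℝ)+1) < x⁻¹ := by
      calc ((a:ℝ)+1) = (((a:ℝ)+1)⁻¹)⁻¹ := (inv_inv _).symm
        _ < x⁻¹ := inv_strictAnti₀ hx0 h2
    have hinv2 : x⁻¹ < (a:ℝ)+2 := by
      calc x⁻¹ < (((a:ℝ)+2)⁻¹)⁻¹ := inv_strictAnti₀ (by positivity) h1
        _ = (a:ℝ)+2 := inv_inv _
    have hfl : ⌊x⁻¹⌋ = (a:ℤ)+1 := by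
      rw [Int.floor_eq_iff]
      constructor
      · push_cast; linarith
      · push_cast; linarith
    have hG : gaussMap x = x⁻¹ - ((a:ℝ)+1) := by
      show Int.fract x⁻¹ = _
      rw [Int.fract, hfl]; push_cast; ring
    refine ⟨gaussMap x, hGE, ?_⟩
    rw [hG]
    show ((a:ℝ) + 1 + (x⁻¹ - ((a:ℝ)+1)))⁻¹ = x
    rw [show (a:ℝ) + 1 + (x⁻¹ - ((a:ℝ)+1)) = x⁻¹ by ring, inv_inv]
  · rintro ⟨t, htE, rfl⟩
    obtain ⟨ht0, ht1⟩ := hE htE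
    have hd0 : (0:ℝ) < (a:ℝ)+1+t := by positivity
    have h1 : ((a:ℝ)+1) < (a:ℝ)+1+t := by linarith
    have h2 : (a:ℝ)+1+t < (a:ℝ)+2 := by linarith
    have hinv : (phiB a t)⁻¹ = (a:ℝ)+1+t := by
      rw [phiB, inv_inv]
    refine ⟨?_, ?_, ?_⟩
    · show gaussMap (phiB a t) ∈ E
      have : gaussMap (phiB a t) = Int.fract ((a:ℝ)+1+t) := by
        rw [gaussMap, hinv]
      rw [this]
      have : Int.fract ((a:ℝ)+1+t) = t := by
        rw [show (a:ℝ)+1+t = t + ((a:ℤ)+1 : ℤ) by push_cast; ring, Int.fract_add_intCast,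
          Int.fract_eq_self.mpr ⟨le_of_lt ht0, ht1⟩]
      rw [this]; exact htE
    · rw [phiB]; exact inv_strictAnti₀ hd0 h2
    · rw [phiB]; exact inv_strictAnti₀ (by positivity) h1

lemma claimB :
    Ioo (0:ℝ) 1 \ (⋃ a, brI a) ⊆ Inv.inv '' (Set.range ((↑) : ℤ → ℝ)) := by
  rintro x ⟨⟨hx0, hx1⟩, hnot⟩
  by_contra hrat
  have hinv1 : 1 < x⁻¹ := by
    calc (1:ℝ) = (1:ℝ)⁻¹ := by norm_num
      _ < x⁻¹ := inv_strictAnti₀ hx0 hx1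
  have hne : x⁻¹ ≠ (⌊x⁻¹⌋ : ℝ) := by
    intro h
    exact hrat ⟨x⁻¹, ⟨⌊x⁻¹⌋, h.symm⟩, inv_inv x⟩
  have hfr : (⌊x⁻¹⌋ : ℝ) < x⁻¹ := lt_of_le_of_ne (Int.floor_le _) (Ne.symm hne)
  have hlt : x⁻¹ < (⌊x⁻¹⌋ : ℝ) + 1 := Int.lt_floor_add_one _
  have hfl1 : 1 ≤ ⌊x⁻¹⌋ := by
    have : (1:ℤ) ≤ ⌊x⁻¹⌋ := Int.le_floor.mpr (by exact_mod_cast le_of_lt hinv1)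
    exact this
  apply hnot
  refine Set.mem_iUnion.mpr ⟨(⌊x⁻¹⌋ - 1).toNat, ?_⟩
  have hcast : ((((⌊x⁻¹⌋ - 1).toNat : ℕ)) : ℝ) = (⌊x⁻¹⌋ : ℝ) - 1 := by
    have : ((⌊x⁻¹⌋ - 1).toNat : ℤ) = ⌊x⁻¹⌋ - 1 := Int.toNat_of_nonneg (by omega)
    exact_mod_cast congrArg (fun z : ℤ => (z : ℝ)) this
  constructor
  · rw [hcast]
    have h2 : (0:ℝ) < (⌊x⁻¹⌋:ℝ) - 1 + 2 := by
      have : (1:ℝ) ≤ (⌊x⁻¹⌋:ℝ) := by exact_mod_cast hfl1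
      linarith
    calc ((⌊x⁻¹⌋:ℝ) - 1 + 2)⁻¹ = ((⌊x⁻¹⌋:ℝ) + 1)⁻¹ := by ring_nf
      _ < x := by
        calc ((⌊x⁻¹⌋:ℝ) + 1)⁻¹ < (x⁻¹)⁻¹ := inv_strictAnti₀ (by positivity) hlt
          _ = x := inv_inv x
  · rw [hcast]
    calc x = (x⁻¹)⁻¹ := (inv_inv x).symm
      _ < ((⌊x⁻¹⌋:ℝ) - 1 + 1)⁻¹ := by
          rw [show (⌊x⁻¹⌋:ℝ) - 1 + 1 = (⌊x⁻¹⌋:ℝ) by ring]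
          exact inv_strictAnti₀ (by
            have : (1:ℝ) ≤ (⌊x⁻¹⌋:ℝ) := by exact_mod_cast hfl1
            linarith) hfr

lemma volume_branch_exc : volume (Ioo (0:ℝ) 1 \ (⋃ a, brI a)) = 0 :=
  measure_mono_null claimB (((Set.countable_range _).image _).measure_zero _)

lemma lintegral_image_1d {s : Set ℝ} {f : ℝ → ℝ} {f' : ℝ → ℝ} (hs : MeasurableSet s)
    (hf' : ∀ x ∈ s, HasDerivWithinAt f (f' x) s x) (hf : Set.InjOn f s) (g : ℝ → ℝ≥0∞) :
    ∫⁻ x in f '' s, g x = ∫⁻ x in s, ENNReal.ofReal |f' x| * g (f x) := by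
  simpa only [ContinuousLinearMap.det_toSpanSingleton] using
    lintegral_image_eq_lintegral_abs_det_fderiv_mul volume hs
      (fun x hx => (hf' x hx).hasFDerivWithinAt) hf g

lemma phiB_hasDeriv (a : ℕ) {t : ℝ} {s : Set ℝ} (hs : s ⊆ Ioo (0:ℝ) 1) (ht : t ∈ s) :
    HasDerivWithinAt (phiB a) (-(((a:ℝ)+1+t)^2)⁻¹) s t := by
  have h0 : ((a:ℝ)+1+t) ≠ 0 := by
    have := (hs ht).1; positivity
  have h : HasDerivAt (fun u : ℝ => ((a:ℝ)+1+u)⁻¹) (-1 / ((a:ℝ)+1+t)^2) t := by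
    have h1 : HasDerivAt (fun u : ℝ => (a:ℝ)+1+u) 1 t := by
      simpa using (hasDerivAt_id t).const_add ((a:ℝ)+1)
    simpa using h1.fun_inv h0
  have : -1 / ((a:ℝ)+1+t)^2 = -(((a:ℝ)+1+t)^2)⁻¹ := by ring
  rw [← this]
  exact h.hasDerivWithinAt

lemma phiB_injOn (a : ℕ) {s : Set ℝ} : Set.InjOn (phiB a) s := by
  intro t _ u _ h
  have := inv_injective h
  linarith

lemma phiB_image_meas {E : Set ℝ} (hE : MeasurableSet E) (hE1 : E ⊆ Ioo (0:ℝ) 1) (a : ℕ) :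
    MeasurableSet (phiB a '' E) := by
  rw [← claimA hE1 a]
  exact (measurable_gaussMap hE).inter measurableSet_Ioo

/-- volume of a branch image. -/
lemma volume_phiB_image_le {E : Set ℝ} (hE : MeasurableSet E) (hE1 : E ⊆ Ioo (0:ℝ) 1) (a : ℕ) :
    volume (phiB a '' E) ≤ ENNReal.ofReal ((((a:ℝ)+1)^2)⁻¹) * volume E := by
  have h := lintegral_image_1d hE (fun t ht => phiB_hasDeriv a hE1 ht) (phiB_injOn a)
    (fun _ => (1:ℝ≥0∞))
  have hvol : volume (phiB a '' E) = ∫⁻ x in phiB a '' E, (1:ℝ≥0∞) := by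
    rw [setLIntegral_one]
  rw [hvol, h]
  calc ∫⁻ t in E, ENNReal.ofReal |(-((((a:ℝ)+1+t)^2)⁻¹))| * 1
      ≤ ∫⁻ _ in E, ENNReal.ofReal ((((a:ℝ)+1)^2)⁻¹) := by
        refine setLIntegral_mono (by fun_prop) ?_
        intro t ht
        rw [mul_one]
        apply ENNReal.ofReal_le_ofReal
        rw [abs_neg, abs_inv, abs_of_nonneg (by positivity)]
        apply inv_anti₀ (by positivity)
        have := (hE1 ht).1
        nlinarith [Nat.cast_nonneg (α := ℝ) a]
    _ = ENNReal.ofReal ((((a:ℝ)+1)^2)⁻¹) * volume E := setLIntegral_const _ _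

/-- The Gauss density measure (twice the Gauss measure, up to log 2). -/
noncomputable def nu : Measure ℝ :=
  volume.withDensity (fun x => ENNReal.ofReal ((1+x)⁻¹))

lemma nu_apply {E : Set ℝ} (hE : MeasurableSet E) :
    nu E = ∫⁻ x in E, ENNReal.ofReal ((1+x)⁻¹) := withDensity_apply _ hE

lemma nu_ac : nu ≪ volume := withDensity_absolutelyContinuous _ _

lemma nu_le_volume {E : Set ℝ} (hE : MeasurableSet E) (hE1 : E ⊆ Ioo (0:ℝ) 1) :
    nu E ≤ volume E := by
  rw [nu_apply hE]
  calc ∫⁻ x in E, ENNReal.ofReal ((1+x)⁻¹) ≤ ∫⁻ _ in E, 1 := by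
        refine setLIntegral_mono (by fun_prop) ?_
        intro x hx
        have h0 := (hE1 hx).1
        calc ENNReal.ofReal ((1+x)⁻¹) ≤ ENNReal.ofReal 1 := by
              apply ENNReal.ofReal_le_ofReal
              rw [inv_le_one_iff₀]; right; linarith
          _ = 1 := ENNReal.ofReal_one
    _ = volume E := setLIntegral_one E

lemma volume_le_two_nu {E : Set ℝ} (hE : MeasurableSet E) (hE1 : E ⊆ Ioo (0:ℝ) 1) :
    volume E ≤ 2 * nu E := by
  rw [nu_apply hE, ← lintegral_const_mul _ (by fun_prop)]
  calc volume E = ∫⁻ _ in E, 1 := (setLIntegral_one E).symm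
    _ ≤ ∫⁻ x in E, 2 * ENNReal.ofReal ((1+x)⁻¹) := by
        refine setLIntegral_mono (by fun_prop) ?_
        intro x hx
        have h1 := (hE1 hx).2
        have h0 := (hE1 hx).1
        have : (2:ℝ≥0∞) * ENNReal.ofReal ((1+x)⁻¹) = ENNReal.ofReal (2 * (1+x)⁻¹) := by
          rw [ENNReal.ofReal_mul (by norm_num)]
          norm_num
        rw [this]
        calc (1:ℝ≥0∞) = ENNReal.ofReal 1 := ENNReal.ofReal_one.symm
          _ ≤ ENNReal.ofReal (2 * (1+x)⁻¹) := by
              apply ENNReal.ofReal_le_ofReal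
              rw [show (2:ℝ) * (1+x)⁻¹ = 2 / (1+x) by rw [div_eq_mul_inv]]
              rw [le_div_iff₀ (by linarith)]
              linarith

lemma tele_hasSum {t : ℝ} (ht : 0 ≤ t) :
    HasSum (fun a : ℕ => ((((a:ℝ)+1+t)*((a:ℝ)+2+t))⁻¹)) ((1+t)⁻¹) := by
  set f : ℕ → ℝ := fun a => ((a:ℝ)+1+t)⁻¹ with hf
  have hpos : ∀ a : ℕ, (0:ℝ) < (a:ℝ)+1+t := by
    intro a; positivity
  have hterm : ∀ a : ℕ, ((((a:ℝ)+1+t)*((a:ℝ)+2+t))⁻¹) = f a - f (a+1) := by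
    intro a
    have h1 := hpos a
    have h2 := hpos (a+1)
    rw [hf]
    simp only [Nat.cast_add, Nat.cast_one]
    rw [eq_sub_iff_add_eq]
    field_simp
    ring
  have hnonneg : ∀ a : ℕ, (0:ℝ) ≤ (((a:ℝ)+1+t)*((a:ℝ)+2+t))⁻¹ := by
    intro a
    have h1 := hpos a
    positivity
  have hsum : ∀ n : ℕ, ∑ i ∈ Finset.range n, ((((i:ℝ)+1+t)*((i:ℝ)+2+t))⁻¹) = f 0 - f n := by
    intro n
    calc ∑ i ∈ Finset.range n, ((((i:ℝ)+1+t)*((i:ℝ)+2+t))⁻¹)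
        = ∑ i ∈ Finset.range n, (f i - f (i+1)) := by
          refine Finset.sum_congr rfl ?_
          intro i _
          exact hterm i
      _ = f 0 - f n := Finset.sum_range_sub' f n
  have hbdd : ∀ n : ℕ, ∑ i ∈ Finset.range n, ((((i:ℝ)+1+t)*((i:ℝ)+2+t))⁻¹) ≤ f 0 := by
    intro n
    rw [hsum n]
    have : 0 ≤ f n := le_of_lt (inv_pos.mpr (hpos n))
    linarith
  have hsummable : Summable (fun a : ℕ => ((((a:ℝ)+1+t)*((a:ℝ)+2+t))⁻¹)) :=
    summable_of_sum_range_le hnonneg hbdd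
  have htend : Filter.Tendsto (fun n : ℕ => f 0 - f n) Filter.atTop (nhds (f 0 - 0)) := by
    refine Filter.Tendsto.const_sub _ ?_
    have : Filter.Tendsto (fun n : ℕ => ((n:ℝ)+1+t)) Filter.atTop Filter.atTop := by
      apply Filter.tendsto_atTop_add_const_right
      exact Filter.tendsto_atTop_add_const_right _ _ tendsto_natCast_atTop_atTop
    exact Filter.Tendsto.comp tendsto_inv_atTop_zero this
  have h1 : Filter.Tendsto (fun n : ℕ => ∑ i ∈ Finset.range n,
      ((((i:ℝ)+1+t)*((i:ℝ)+2+t))⁻¹)) Filter.atTop (nhds (f 0 - 0)) := by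
    simpa only [hsum] using htend
  have h2 := hsummable.hasSum.tendsto_sum_nat
  have : ∑' a : ℕ, ((((a:ℝ)+1+t)*((a:ℝ)+2+t))⁻¹) = f 0 - 0 :=
    tendsto_nhds_unique h2 h1
  have hf0 : f 0 - 0 = (1+t)⁻¹ := by
    rw [hf]; norm_num
  rw [hf0] at this
  exact this ▸ hsummable.hasSum

lemma tele_ennreal {t : ℝ} (ht : 0 ≤ t) :
    ∑' a : ℕ, ENNReal.ofReal ((((a:ℝ)+1+t)*((a:ℝ)+2+t))⁻¹) = ENNReal.ofReal ((1+t)⁻¹) := by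
  rw [← ENNReal.ofReal_tsum_of_nonneg (fun a => by positivity) (tele_hasSum ht).summable,
    (tele_hasSum ht).tsum_eq]

lemma nu_phiB_image {E : Set ℝ} (hE : MeasurableSet E) (hE1 : E ⊆ Ioo (0:ℝ) 1) (a : ℕ) :
    nu (phiB a '' E) = ∫⁻ t in E, ENNReal.ofReal ((((a:ℝ)+1+t)*((a:ℝ)+2+t))⁻¹) := by
  rw [nu_apply (phiB_image_meas hE hE1 a),
    lintegral_image_1d hE (fun t ht => phiB_hasDeriv a hE1 ht) (phiB_injOn a)]
  refine setLIntegral_congr_fun hE ?_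
  intro t ht
  beta_reduce
  have ht0 : (0:ℝ) < t := (hE1 ht).1
  have hd : (0:ℝ) < (a:ℝ)+1+t := by positivity
  rw [abs_neg, abs_inv, abs_of_nonneg (by positivity),
    ← ENNReal.ofReal_mul (by positivity)]
  congr 1
  rw [phiB]
  rw [show (1 + ((a:ℝ)+1+t)⁻¹) = ((a:ℝ)+1+t+1) / ((a:ℝ)+1+t) by field_simp]
  rw [show ((a:ℝ)+1+t+1) = ((a:ℝ)+2+t) by ring]
  rw [inv_div]
  field_simp

lemma nu_gauss_step {E : Set ℝ} (hE : MeasurableSet E) (hE1 : E ⊆ Ioo (0:ℝ) 1) :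
    nu (gaussMap ⁻¹' E ∩ Ioo (0:ℝ) 1) = nu E := by
  set S := gaussMap ⁻¹' E ∩ Ioo (0:ℝ) 1 with hS
  have hU : (⋃ a, phiB a '' E) ⊆ S := by
    intro x hx
    obtain ⟨a, hx⟩ := Set.mem_iUnion.mp hx
    rw [← claimA hE1 a] at hx
    exact ⟨hx.1, brI_subset a hx.2⟩
  have hS2 : S ⊆ (⋃ a, phiB a '' E) ∪ (Ioo (0:ℝ) 1 \ ⋃ a, brI a) := by
    intro x hx
    by_cases h : x ∈ ⋃ a, brI a
    · obtain ⟨a, ha⟩ := Set.mem_iUnion.mp h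
      left
      exact Set.mem_iUnion.mpr ⟨a, (claimA hE1 a) ▸ (⟨hx.1, ha⟩ : x ∈ gaussMap ⁻¹' E ∩ brI a)⟩
    · right; exact ⟨hx.2, h⟩
  have hexc : nu (Ioo (0:ℝ) 1 \ ⋃ a, brI a) = 0 := nu_ac volume_branch_exc
  have h1 : nu S = nu (⋃ a, phiB a '' E) := by
    refine le_antisymm ?_ (measure_mono hU)
    calc nu S ≤ nu ((⋃ a, phiB a '' E) ∪ (Ioo (0:ℝ) 1 \ ⋃ a, brI a)) := measure_mono hS2
      _ ≤ nu (⋃ a, phiB a '' E) + nu (Ioo (0:ℝ) 1 \ ⋃ a, brI a) := measure_union_le _ _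
      _ = nu (⋃ a, phiB a '' E) := by rw [hexc, add_zero]
  have hdisj : Pairwise (Function.onFun Disjoint (fun a => phiB a '' E)) := by
    intro a b hab
    refine Set.disjoint_of_subset ?_ ?_ (brI_disjoint hab)
    · show phiB a '' E ⊆ brI a
      rw [← claimA hE1 a]; exact Set.inter_subset_right
    · show phiB b '' E ⊆ brI b
      rw [← claimA hE1 b]; exact Set.inter_subset_right
  have h2 : nu (⋃ a, phiB a '' E) = ∑' a, nu (phiB a '' E) :=
    measure_iUnion hdisj (fun a => phiB_image_meas hE hE1 a)
  rw [h1, h2]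
  have h3 : ∀ a : ℕ, nu (phiB a '' E) =
      ∫⁻ t in E, ENNReal.ofReal ((((a:ℝ)+1+t)*((a:ℝ)+2+t))⁻¹) :=
    fun a => nu_phiB_image hE hE1 a
  simp_rw [h3]
  rw [← lintegral_tsum (fun a => by fun_prop)]
  rw [nu_apply hE]
  refine setLIntegral_congr_fun hE ?_
  intro t ht
  exact tele_ennreal (le_of_lt (hE1 ht).1)

lemma nu_gauss_iter (j : ℕ) : ∀ {E : Set ℝ}, MeasurableSet E → E ⊆ Ioo (0:ℝ) 1 →
    nu ((gaussMap^[j]) ⁻¹' E ∩ Ioo (0:ℝ) 1) = nu E := by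
  induction j with
  | zero =>
      intro E hE hE1
      simp only [Function.iterate_zero, Set.preimage_id]
      rw [Set.inter_eq_self_of_subset_left hE1]
  | succ n ih =>
      intro E hE hE1
      set T := (gaussMap^[n]) ⁻¹' (gaussMap ⁻¹' E ∩ Ioo (0:ℝ) 1) ∩ Ioo (0:ℝ) 1 with hT
      have hTsub : T ⊆ (gaussMap^[n+1]) ⁻¹' E ∩ Ioo (0:ℝ) 1 := by
        rintro x ⟨hx1, hx2⟩
        refine ⟨?_, hx2⟩
        show gaussMap^[n+1] x ∈ E
        rw [Function.iterate_succ_apply']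
        exact hx1.1
      have hSsub : (gaussMap^[n+1]) ⁻¹' E ∩ Ioo (0:ℝ) 1 ⊆ T ∪ Set.range ((↑) : ℚ → ℝ) := by
        rintro x ⟨hx1, hx2⟩
        by_cases hirr : Irrational x
        · left
          obtain ⟨hmem, _⟩ := gaussMap_iter_mem hx2 hirr n
          refine ⟨⟨?_, hmem⟩, hx2⟩
          show gaussMap (gaussMap^[n] x) ∈ E
          have : gaussMap^[n+1] x = gaussMap (gaussMap^[n] x) := Function.iterate_succ_apply' _ _ _
          rw [← this]
          exact hx1
        · right
          simpa [Irrational] using hirr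
      have hrat : nu (Set.range ((↑) : ℚ → ℝ)) = 0 := nu_ac volume_rat
      have heq : nu ((gaussMap^[n+1]) ⁻¹' E ∩ Ioo (0:ℝ) 1) = nu T := by
        refine le_antisymm ?_ (measure_mono hTsub)
        calc nu ((gaussMap^[n+1]) ⁻¹' E ∩ Ioo (0:ℝ) 1) ≤ nu (T ∪ Set.range ((↑) : ℚ → ℝ)) :=
              measure_mono hSsub
          _ ≤ nu T + nu (Set.range ((↑) : ℚ → ℝ)) := measure_union_le _ _
          _ = nu T := by rw [hrat, add_zero]
      rw [heq, hT, ih ((measurable_gaussMap hE).inter measurableSet_Ioo)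
        Set.inter_subset_right, nu_gauss_step hE hE1]

lemma tail_sum_le (a0 : ℕ) (h1 : 1 ≤ a0) : ∀ N : ℕ,
    ∑ a ∈ Finset.range N, (if a0 ≤ a then ((((a:ℝ)+1)^2)⁻¹) else 0)
      ≤ (a0:ℝ)⁻¹ - ((max N a0 : ℕ):ℝ)⁻¹ := by
  intro N
  induction N with
  | zero => simp
  | succ n ih =>
      rw [Finset.sum_range_succ]
      by_cases h : a0 ≤ n
      · have hmaxn : max n a0 = n := max_eq_left h
        have hmaxn1 : max (n+1) a0 = n+1 := max_eq_left (by omega)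
        rw [if_pos h, hmaxn1]
        rw [hmaxn] at ih
        have hn0 : (0:ℝ) < (n:ℝ) := by
          have : (1:ℕ) ≤ n := le_trans h1 h
          exact_mod_cast Nat.lt_of_lt_of_le Nat.zero_lt_one this
        have key : (((n:ℝ)+1)^2)⁻¹ ≤ (n:ℝ)⁻¹ - (((n+1:ℕ)):ℝ)⁻¹ := by
          push_cast
          have h2 : (n:ℝ)⁻¹ - ((n:ℝ)+1)⁻¹ = ((n:ℝ)*((n:ℝ)+1))⁻¹ := by
            field_simp
            ring
          rw [h2]
          apply inv_anti₀ (by positivity)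
          nlinarith
        linarith
      · have hn : n < a0 := by omega
        have hmaxn : max n a0 = a0 := max_eq_right (le_of_lt hn)
        have hmaxn1 : max (n+1) a0 = a0 := max_eq_right (by omega)
        rw [if_neg h, hmaxn1, add_zero]
        rw [hmaxn] at ih
        exact ih

lemma tail_tsum_le (a0 : ℕ) (h1 : 1 ≤ a0) :
    ∑' a : ℕ, (if a0 ≤ a then ENNReal.ofReal ((((a:ℝ)+1)^2)⁻¹) else 0)
      ≤ ENNReal.ofReal ((a0:ℝ)⁻¹) := by
  apply ENNReal.tsum_le_of_sum_range_le
  intro n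
  calc ∑ a ∈ Finset.range n, (if a0 ≤ a then ENNReal.ofReal ((((a:ℝ)+1)^2)⁻¹) else 0)
      = ENNReal.ofReal (∑ a ∈ Finset.range n, (if a0 ≤ a then ((((a:ℝ)+1)^2)⁻¹) else 0)) := by
        rw [ENNReal.ofReal_sum_of_nonneg]
        · refine Finset.sum_congr rfl ?_
          intro a _
          by_cases h : a0 ≤ a
          · rw [if_pos h, if_pos h]
          · rw [if_neg h, if_neg h, ENNReal.ofReal_zero]
        · intro a _
          by_cases h : a0 ≤ a
          · rw [if_pos h]; positivity
          · rw [if_neg h]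
    _ ≤ ENNReal.ofReal ((a0:ℝ)⁻¹) := by
        apply ENNReal.ofReal_le_ofReal
        have := tail_sum_le a0 h1 n
        have h2 : (0:ℝ) ≤ ((max n a0 : ℕ):ℝ)⁻¹ := by positivity
        linarith

lemma cor_lemma {F : Set ℝ} (hF : MeasurableSet F) (hF1 : F ⊆ Ioo (0:ℝ) 1)
    {s : ℝ} (hs0 : 0 < s) (hs3 : s ≤ 1/3) :
    volume (Ioo (0:ℝ) s ∩ gaussMap ⁻¹' F ∩ Ioo (0:ℝ) 1)
      ≤ ENNReal.ofReal (3*s) * volume F := by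
  have hinvs : (3:ℝ) ≤ 1/s := by
    rw [le_div_iff₀ hs0]; linarith
  have hex : ∃ a : ℕ, 1/s < (a:ℝ)+2 := by
    obtain ⟨a, ha⟩ := exists_nat_gt (1/s)
    exact ⟨a, by linarith⟩
  set a0 := Nat.find hex with ha0
  have hC : 1/s < (a0:ℝ)+2 := Nat.find_spec hex
  have ha01 : 1 ≤ a0 := by
    by_contra h
    have : a0 = 0 := by omega
    rw [this] at hC
    norm_num at hC
    rw [one_div] at hinvs
    linarith
  have hmin : ¬ (1/s < ((a0-1:ℕ):ℝ)+2) := Nat.find_min hex (by omega)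
  have hup : ((a0:ℝ)+1) ≤ 1/s := by
    push_neg at hmin
    have hcast : ((a0-1:ℕ):ℝ) = (a0:ℝ) - 1 := by
      have : (((a0-1:ℕ)):ℤ) = (a0:ℤ) - 1 := by omega
      exact_mod_cast congrArg (fun z : ℤ => (z:ℝ)) this
    rw [hcast] at hmin
    linarith
  have ha0inv : ((a0:ℝ))⁻¹ ≤ 3*s := by
    have ha0pos : (0:ℝ) < (a0:ℝ) := by exact_mod_cast Nat.lt_of_lt_of_le Nat.zero_lt_one ha01
    -- from a0 + 1 <= 1/s we get a0 >= 1/s - 1, hence a0 * s >= 1 - s >= 2/3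
    have hh := mul_le_mul_of_nonneg_right hup (le_of_lt hs0)
    rw [one_div, inv_mul_cancel₀ (ne_of_gt hs0)] at hh
    -- hh : (a0 + 1) * s ≤ 1
    -- Use minimality instead: hC : 1/s < a0 + 2, so a0 > 1/s - 2 ≥ 1/s - 2.
    -- Then a0 * s > 1 - 2s ≥ 1/3, so 3 * s * a0 ≥ 1.
    have hC' := mul_lt_mul_of_pos_right hC hs0
    rw [one_div, inv_mul_cancel₀ (ne_of_gt hs0)] at hC'
    -- hC' : 1 < (a0 + 2) * s
    rw [inv_eq_one_div, div_le_iff₀ ha0pos]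
    nlinarith
  set W := Ioo (0:ℝ) s ∩ gaussMap ⁻¹' F ∩ Ioo (0:ℝ) 1 with hW
  have hWsub : W ⊆ (⋃ a, W ∩ brI a) ∪ (Ioo (0:ℝ) 1 \ ⋃ a, brI a) := by
    intro x hx
    by_cases h : x ∈ ⋃ a, brI a
    · obtain ⟨a, ha⟩ := Set.mem_iUnion.mp h
      exact Or.inl (Set.mem_iUnion.mpr ⟨a, hx, ha⟩)
    · exact Or.inr ⟨hx.2, h⟩
  have hbranch : ∀ a : ℕ, volume (W ∩ brI a) ≤
      (if a0 ≤ a then ENNReal.ofReal ((((a:ℝ)+1)^2)⁻¹) else 0) * volume F := by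
    intro a
    by_cases h : a0 ≤ a
    · rw [if_pos h]
      calc volume (W ∩ brI a) ≤ volume (phiB a '' F) := by
            apply measure_mono
            rw [← claimA hF1 a]
            rintro x ⟨⟨⟨_, hpre⟩, _⟩, hbr⟩
            exact ⟨hpre, hbr⟩
        _ ≤ ENNReal.ofReal ((((a:ℝ)+1)^2)⁻¹) * volume F := volume_phiB_image_le hF hF1 a
    · rw [if_neg h, zero_mul]
      have : W ∩ brI a = ∅ := by
        rw [Set.eq_empty_iff_forall_notMem]
        rintro x ⟨⟨⟨⟨hx0, hxs⟩, _⟩, _⟩, hbr⟩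
        have h2 : ((a:ℝ)+2)⁻¹ < s := lt_trans hbr.1 hxs
        have h3 : 1/s < (a:ℝ)+2 := by
          rw [div_lt_iff₀ hs0]
          have hpos : (0:ℝ) < (a:ℝ)+2 := by positivity
          calc (1:ℝ) = ((a:ℝ)+2) * ((a:ℝ)+2)⁻¹ := (mul_inv_cancel₀ (ne_of_gt hpos)).symm
            _ < ((a:ℝ)+2) * s := mul_lt_mul_of_pos_left h2 hpos
        have hlt : a < a0 := by omega
        exact Nat.find_min hex hlt h3
      rw [this, measure_empty]
  calc volume W ≤ volume ((⋃ a, W ∩ brI a) ∪ (Ioo (0:ℝ) 1 \ ⋃ a, brI a)) :=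
        measure_mono hWsub
    _ ≤ volume (⋃ a, W ∩ brI a) + volume (Ioo (0:ℝ) 1 \ ⋃ a, brI a) := measure_union_le _ _
    _ = volume (⋃ a, W ∩ brI a) := by rw [volume_branch_exc, add_zero]
    _ ≤ ∑' a, volume (W ∩ brI a) := measure_iUnion_le _
    _ ≤ ∑' a, (if a0 ≤ a then ENNReal.ofReal ((((a:ℝ)+1)^2)⁻¹) else 0) * volume F :=
        ENNReal.tsum_le_tsum hbranch
    _ = (∑' a, (if a0 ≤ a then ENNReal.ofReal ((((a:ℝ)+1)^2)⁻¹) else 0)) * volume F :=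
        ENNReal.tsum_mul_right
    _ ≤ ENNReal.ofReal ((a0:ℝ)⁻¹) * volume F := by
        exact mul_le_mul_left (tail_tsum_le a0 ha01) _
    _ ≤ ENNReal.ofReal (3*s) * volume F := by
        exact mul_le_mul_left (ENNReal.ofReal_le_ofReal ha0inv) _

/-- There is a constant `c > 1` such that for all integers `m, k > 1` and every
odd `n ≥ 3`, `ℓ(X_{1,m} ∩ X_{n,k}) < c·ℓ(X_{1,m})·ℓ(X_{n,k})`. -/
theorem cfSet_first_digit_almost_independent :
    ∃ c : ℝ, 1 < c ∧ ∀ m k n : ℕ, 1 < m → 1 < k → Odd n → 3 ≤ n →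
      volume (cfSet 1 m ∩ cfSet n k) <
        ENNReal.ofReal c * volume (cfSet 1 m) * volume (cfSet n k) := by
  refine ⟨7, by norm_num, ?_⟩
  intro m k n hm hk _hodd hn3
  set s : ℝ := ((m:ℝ)+1)⁻¹ with hs
  have hs0 : 0 < s := by positivity
  have hs3 : s ≤ 1/3 := by
    rw [hs]
    rw [inv_le_comm₀ (by positivity) (by norm_num)]
    have : (3:ℝ) ≤ (m:ℝ)+1 := by
      have : (2:ℕ) ≤ m := hm
      have : (2:ℝ) ≤ (m:ℝ) := by exact_mod_cast this
      linarith
    simpa using this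
  -- the sets
  have hE : MeasurableSet (cfSet 1 k) := cfSet_one_meas k
  have hE1 : cfSet 1 k ⊆ Ioo (0:ℝ) 1 := cfSet_one_subset k
  have hiter : Measurable (gaussMap^[n-1]) := measurable_gaussMap.iterate (n-1)
  have hiter2 : Measurable (gaussMap^[n-2]) := measurable_gaussMap.iterate (n-2)
  set P := (gaussMap^[n-1]) ⁻¹' (cfSet 1 k) ∩ Ioo (0:ℝ) 1 with hP
  have hPmeas : MeasurableSet P := (hiter hE).inter measurableSet_Ioo
  have hPsub : P ⊆ Ioo (0:ℝ) 1 := Set.inter_subset_right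
  set F := (gaussMap^[n-2]) ⁻¹' (cfSet 1 k) ∩ Ioo (0:ℝ) 1 with hF
  have hFmeas : MeasurableSet F := (hiter2 hE).inter measurableSet_Ioo
  have hFsub : F ⊆ Ioo (0:ℝ) 1 := Set.inter_subset_right
  -- volume of X = cfSet n k
  have hXeq : volume (cfSet n k) = volume P := by
    rw [cfSet_eq n k (by omega)]
    have : (gaussMap^[n-1]) ⁻¹' (cfSet 1 k) ∩ Ioo (0:ℝ) 1 ∩ {x | Irrational x} =
        P ∩ {x | Irrational x} := rfl
    rw [this, vol_inter_irr]
  have hnuP : nu P = nu (cfSet 1 k) := nu_gauss_iter (n-1) hE hE1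
  have hnuF : nu F = nu (cfSet 1 k) := nu_gauss_iter (n-2) hE hE1
  -- lower bound for volume X
  have hXlow : nu (cfSet 1 k) ≤ volume (cfSet n k) := by
    rw [hXeq, ← hnuP]
    exact nu_le_volume hPmeas hPsub
  have hXpos : volume (cfSet n k) ≠ 0 := by
    intro h0
    have h1 : nu (cfSet 1 k) = 0 := le_antisymm (h0 ▸ hXlow) (zero_le)
    have h2 := volume_le_two_nu hE hE1
    rw [h1, mul_zero] at h2
    rw [volume_cfSet_one k] at h2
    have : (0:ℝ) < ((k:ℝ)+1)⁻¹ := by positivity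
    simp only [nonpos_iff_eq_zero, ENNReal.ofReal_eq_zero] at h2
    linarith
  -- volume of A
  have hAvol : volume (cfSet 1 m) = ENNReal.ofReal s := volume_cfSet_one m
  -- inclusion for the intersection
  have hincl : cfSet 1 m ∩ cfSet n k ⊆ Ioo (0:ℝ) s ∩ gaussMap ⁻¹' F ∩ Ioo (0:ℝ) 1 := by
    rintro x ⟨hxA, hxX⟩
    obtain ⟨hxIoo, hxirr, hdig⟩ := hxX
    have hxA' := (cfSet_one m) ▸ hxA
    obtain ⟨_, hxs⟩ := hxA'
    have hGx := gaussMap_mem hxIoo hxirr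
    refine ⟨⟨hxs, ?_⟩, hxIoo⟩
    show gaussMap x ∈ F
    refine ⟨?_, hGx.1⟩
    show gaussMap^[n-2] (gaussMap x) ∈ cfSet 1 k
    have harith : n - 1 = (n-2) + 1 := by omega
    have hit : gaussMap^[n-1] x = gaussMap^[n-2] (gaussMap x) := by
      rw [harith, Function.iterate_succ_apply]
    rw [← hit]
    obtain ⟨hmem', hirr'⟩ := gaussMap_iter_mem hxIoo hxirr (n-1)
    exact ⟨hmem', hirr', hdig⟩
  -- main estimate
  have hmain : volume (cfSet 1 m ∩ cfSet n k) ≤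
      ENNReal.ofReal 6 * (ENNReal.ofReal s * volume (cfSet n k)) := by
    calc volume (cfSet 1 m ∩ cfSet n k)
        ≤ volume (Ioo (0:ℝ) s ∩ gaussMap ⁻¹' F ∩ Ioo (0:ℝ) 1) := measure_mono hincl
      _ ≤ ENNReal.ofReal (3*s) * volume F := cor_lemma hFmeas hFsub hs0 hs3
      _ ≤ ENNReal.ofReal (3*s) * (2 * nu F) :=
          mul_le_mul_right (volume_le_two_nu hFmeas hFsub) _
      _ = ENNReal.ofReal (3*s) * (2 * nu (cfSet 1 k)) := by rw [hnuF]
      _ ≤ ENNReal.ofReal (3*s) * (2 * volume (cfSet n k)) :=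
          mul_le_mul_right (mul_le_mul_right hXlow _) _
      _ = ENNReal.ofReal 6 * (ENNReal.ofReal s * volume (cfSet n k)) := by
          rw [← mul_assoc, ← mul_assoc]
          congr 1
          rw [show (2:ℝ≥0∞) = ENNReal.ofReal 2 by norm_num,
            ← ENNReal.ofReal_mul (by positivity), ← ENNReal.ofReal_mul (by norm_num)]
          congr 1
          ring
  -- strictness
  have hprodpos : ENNReal.ofReal s * volume (cfSet n k) ≠ 0 := by
    apply mul_ne_zero
    · simpa using (ENNReal.ofReal_pos.mpr hs0).ne'
    · exact hXpos
  have hprodfin : ENNReal.ofReal s * volume (cfSet n k) ≠ ⊤ := by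
    apply ENNReal.mul_ne_top ENNReal.ofReal_ne_top
    have : volume (cfSet n k) ≤ volume (Ioo (0:ℝ) 1) :=
      measure_mono (fun x hx => hx.1)
    rw [Real.volume_Ioo] at this
    exact ne_top_of_le_ne_top (by norm_num) this
  have hstrict : ENNReal.ofReal 6 * (ENNReal.ofReal s * volume (cfSet n k)) <
      ENNReal.ofReal 7 * (ENNReal.ofReal s * volume (cfSet n k)) := by
    rw [ENNReal.mul_lt_mul_iff_left hprodpos hprodfin]
    rw [ENNReal.ofReal_lt_ofReal_iff (by norm_num)]
    norm_num
  calc volume (cfSet 1 m ∩ cfSet n k)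
      ≤ ENNReal.ofReal 6 * (ENNReal.ofReal s * volume (cfSet n k)) := hmain
    _ < ENNReal.ofReal 7 * (ENNReal.ofReal s * volume (cfSet n k)) := hstrict
    _ = ENNReal.ofReal 7 * volume (cfSet 1 m) * volume (cfSet n k) := by
        rw [hAvol, mul_assoc]
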